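/- Let T, T' be compact operators on a Hilbert space and suppose n(λ, T) ≤ C·λ^{-p} for all λ > 0 with constants C, p > 0, and n(λ, T') = o(λ^{-p}) as λ → 0. Then limsup_{λ→0} λ^p · n(λ, T + T') ≤ C and if in addition n(λ, T) ~ C·λ^{-p} as λ→0, then n(λ, T + T') ~ C·λ^{-p}. -/

import Mathlib

open Filter
open scoped Topology ENNReal

/-- The `k`-th singular value (approximation number) of a continuous linear map. -/
noncomputable def sNum {E F : Type*} [NormedAddCommGroup E] [NormedSpace ℂ E]
    [NormedAddCommGroup F] [NormedSpace ℂ F] (T : E →L[ℂ] F) (k : ℕ) : ℝ :=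
  sInf {c : ℝ | ∃ G : E →L[ℂ] F,
    Module.rank ℂ (LinearMap.range (G : E →ₗ[ℂ] F)) ≤ (k : Cardinal) ∧ ‖T - G‖ ≤ c}

/-- The (extended-real valued) singular value counting function `n(λ, T)`:
the number of singular values of `T` strictly greater than `λ`. -/
noncomputable def nCountE {E F : Type*} [NormedAddCommGroup E] [NormedSpace ℂ E]
    [NormedAddCommGroup F] [NormedSpace ℂ F] (T : E →L[ℂ] F) (lam : ℝ) : ℝ≥0∞ :=
  ∑' _ : {k : ℕ // lam < sNum T k}, 1

section SNum
variable {E F : Type*} [NormedAddCommGroup E] [NormedSpace ℂ E]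
    [NormedAddCommGroup F] [NormedSpace ℂ F]

lemma sNum_set_nonempty (T : E →L[ℂ] F) (k : ℕ) :
    {c : ℝ | ∃ G : E →L[ℂ] F,
      Module.rank ℂ (LinearMap.range (G : E →ₗ[ℂ] F)) ≤ (k : Cardinal) ∧ ‖T - G‖ ≤ c}.Nonempty :=
  ⟨‖T‖, 0, by simp⟩

lemma sNum_set_bddBelow (T : E →L[ℂ] F) (k : ℕ) :
    BddBelow {c : ℝ | ∃ G : E →L[ℂ] F,
      Module.rank ℂ (LinearMap.range (G : E →ₗ[ℂ] F)) ≤ (k : Cardinal) ∧ ‖T - G‖ ≤ c} :=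
  ⟨0, fun c ⟨G, _, hG⟩ => le_trans (norm_nonneg _) hG⟩

lemma sNum_le (T : E →L[ℂ] F) (k : ℕ) {c : ℝ} (G : E →L[ℂ] F)
    (h1 : Module.rank ℂ (LinearMap.range (G : E →ₗ[ℂ] F)) ≤ (k : Cardinal))
    (h2 : ‖T - G‖ ≤ c) : sNum T k ≤ c :=
  csInf_le (sNum_set_bddBelow T k) ⟨G, h1, h2⟩

lemma sNum_exists (T : E →L[ℂ] F) (k : ℕ) {ε : ℝ} (hε : 0 < ε) :
    ∃ G : E →L[ℂ] F, Module.rank ℂ (LinearMap.range (G : E →ₗ[ℂ] F)) ≤ (k : Cardinal) ∧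
      ‖T - G‖ ≤ sNum T k + ε := by
  obtain ⟨c, hc, hlt⟩ := exists_lt_of_csInf_lt (sNum_set_nonempty T k)
    (lt_add_of_pos_right (sNum T k) hε)
  obtain ⟨G, h1, h2⟩ := hc
  exact ⟨G, h1, h2.trans hlt.le⟩

lemma sNum_anti (T : E →L[ℂ] F) {j k : ℕ} (h : j ≤ k) : sNum T k ≤ sNum T j := by
  apply csInf_le_csInf (sNum_set_bddBelow T k) (sNum_set_nonempty T j)
  rintro c ⟨G, h1, h2⟩
  exact ⟨G, h1.trans (by exact_mod_cast Nat.cast_le.mpr h), h2⟩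

lemma sNum_neg (T : E →L[ℂ] F) (k : ℕ) : sNum (-T) k = sNum T k := by
  unfold sNum
  congr 1
  ext c
  constructor
  · rintro ⟨G, h1, h2⟩
    refine ⟨-G, ?_, ?_⟩
    · rw [ContinuousLinearMap.coe_neg, LinearMap.range_neg]; exact h1
    · calc ‖T - -G‖ = ‖-(T - -G)‖ := (norm_neg _).symm
        _ = ‖-T - G‖ := by congr 1; abel
        _ ≤ c := h2
  · rintro ⟨G, h1, h2⟩
    refine ⟨-G, ?_, ?_⟩
    · rw [ContinuousLinearMap.coe_neg, LinearMap.range_neg]; exact h1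
    · calc ‖-T - -G‖ = ‖-(-T - -G)‖ := (norm_neg _).symm
        _ = ‖T - G‖ := by congr 1; abel
        _ ≤ c := h2

lemma sNum_add_le (T T' : E →L[ℂ] F) (j k : ℕ) :
    sNum (T + T') (j + k) ≤ sNum T j + sNum T' k := by
  refine le_of_forall_pos_le_add fun ε hε => ?_
  obtain ⟨G, hG1, hG2⟩ := sNum_exists T j (half_pos hε)
  obtain ⟨G', hG'1, hG'2⟩ := sNum_exists T' k (half_pos hε)
  refine sNum_le _ _ (G + G') ?_ ?_
  · calc Module.rank ℂ (LinearMap.range ((G + G' : E →L[ℂ] F) : E →ₗ[ℂ] F))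
        = LinearMap.rank ((G : E →ₗ[ℂ] F) + (G' : E →ₗ[ℂ] F)) := by
          rw [ContinuousLinearMap.coe_add]
      _ ≤ LinearMap.rank (G : E →ₗ[ℂ] F) + LinearMap.rank (G' : E →ₗ[ℂ] F) :=
          LinearMap.rank_add_le _ _
      _ ≤ (j : Cardinal) + (k : Cardinal) := add_le_add hG1 hG'1
      _ = ((j + k : ℕ) : Cardinal) := by rw [Nat.cast_add]
  · calc ‖T + T' - (G + G')‖ = ‖(T - G) + (T' - G')‖ := by congr 1; abel
      _ ≤ ‖T - G‖ + ‖T' - G'‖ := norm_add_le _ _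
      _ ≤ (sNum T j + ε / 2) + (sNum T' k + ε / 2) := add_le_add hG2 hG'2
      _ = sNum T j + sNum T' k + ε := by ring

end SNum

section NCount
variable {E F : Type*} [NormedAddCommGroup E] [NormedSpace ℂ E]
    [NormedAddCommGroup F] [NormedSpace ℂ F]

lemma nCountE_eq_encard (T : E →L[ℂ] F) (lam : ℝ) :
    nCountE T lam = ({k : ℕ | lam < sNum T k}.encard : ℝ≥0∞) := by
  rw [← ENNReal.tsum_set_one]; rfl

lemma nCountE_le_of_sNum_le (T : E →L[ℂ] F) {lam : ℝ} {k : ℕ} (h : sNum T k ≤ lam) :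
    nCountE T lam ≤ (k : ℝ≥0∞) := by
  rw [nCountE_eq_encard]
  have hsub : {j : ℕ | lam < sNum T j} ⊆ ↑(Finset.range k) := by
    intro j hj
    simp only [Finset.coe_range, Set.mem_Iio]
    by_contra hjk
    exact absurd ((sNum_anti T (not_lt.mp hjk)).trans h) (not_le.mpr hj)
  calc ({k : ℕ | lam < sNum T k}.encard : ℝ≥0∞)
      ≤ ((↑(Finset.range k) : Set ℕ).encard : ℝ≥0∞) := by
        exact_mod_cast ENat.toENNReal_le.mpr (Set.encard_mono hsub)
    _ = (k : ℝ≥0∞) := by rw [Set.encard_coe_eq_coe_finsetCard, Finset.card_range]; simp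

lemma sNum_le_of_nCountE_le (T : E →L[ℂ] F) {lam : ℝ} {k : ℕ}
    (h : nCountE T lam ≤ (k : ℝ≥0∞)) : sNum T k ≤ lam := by
  by_contra hlt
  push_neg at hlt
  have hsub : (↑(Finset.range (k + 1)) : Set ℕ) ⊆ {j : ℕ | lam < sNum T j} := by
    intro j hj
    simp only [Finset.coe_range, Set.mem_Iio] at hj
    exact lt_of_lt_of_le hlt (sNum_anti T (Nat.lt_succ_iff.mp hj))
  have : ((k + 1 : ℕ) : ℝ≥0∞) ≤ nCountE T lam := by
    rw [nCountE_eq_encard]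
    calc ((k + 1 : ℕ) : ℝ≥0∞) = ((↑(Finset.range (k + 1)) : Set ℕ).encard : ℝ≥0∞) := by
          rw [Set.encard_coe_eq_coe_finsetCard, Finset.card_range]; simp
      _ ≤ _ := by exact_mod_cast ENat.toENNReal_le.mpr (Set.encard_mono hsub)
  have hk := this.trans h
  simp only [Nat.cast_add, Nat.cast_one] at hk
  exact absurd hk (not_le.mpr (ENNReal.lt_add_right (ENNReal.natCast_ne_top k) one_ne_zero))

lemma nCountE_neg (T : E →L[ℂ] F) (lam : ℝ) : nCountE (-T) lam = nCountE T lam := by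
  rw [nCountE_eq_encard, nCountE_eq_encard]
  simp only [sNum_neg]

lemma nCountE_add_le (T T' : E →L[ℂ] F) (l1 l2 : ℝ) :
    nCountE (T + T') (l1 + l2) ≤ nCountE T l1 + nCountE T' l2 := by
  rcases eq_or_ne (nCountE T l1) ⊤ with h1 | h1
  · rw [h1, top_add]; exact le_top
  rcases eq_or_ne (nCountE T' l2) ⊤ with h2 | h2
  · rw [h2, add_top]; exact le_top
  obtain ⟨a, ha⟩ : ∃ a : ℕ, nCountE T l1 = (a : ℝ≥0∞) := by
    lift nCountE T l1 to NNReal using h1 with x hx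
    rw [nCountE_eq_encard] at hx
    rcases Set.finite_or_infinite (s := {k : ℕ | l1 < sNum T k}) with hfin | hinf
    · exact ⟨hfin.toFinset.card, by
        rw [hx, Set.Finite.encard_eq_coe_toFinset_card hfin]; simp⟩
    · rw [Set.encard_eq_top hinf] at hx; simp at hx
  obtain ⟨b, hb⟩ : ∃ b : ℕ, nCountE T' l2 = (b : ℝ≥0∞) := by
    lift nCountE T' l2 to NNReal using h2 with x hx
    rw [nCountE_eq_encard] at hx
    rcases Set.finite_or_infinite (s := {k : ℕ | l2 < sNum T' k}) with hfin | hinf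
    · exact ⟨hfin.toFinset.card, by
        rw [hx, Set.Finite.encard_eq_coe_toFinset_card hfin]; simp⟩
    · rw [Set.encard_eq_top hinf] at hx; simp at hx
  have hsa : sNum T a ≤ l1 := sNum_le_of_nCountE_le T ha.le
  have hsb : sNum T' b ≤ l2 := sNum_le_of_nCountE_le T' hb.le
  have : sNum (T + T') (a + b) ≤ l1 + l2 :=
    (sNum_add_le T T' a b).trans (add_le_add hsa hsb)
  calc nCountE (T + T') (l1 + l2) ≤ ((a + b : ℕ) : ℝ≥0∞) := nCountE_le_of_sNum_le _ this
    _ = nCountE T l1 + nCountE T' l2 := by rw [ha, hb, Nat.cast_add]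

end NCount

section Helpers

lemma tendsto_const_mul_nhdsGT {c : ℝ} (hc : 0 < c) :
    Tendsto (fun x : ℝ => c * x) (𝓝[>] 0) (𝓝[>] 0) := by
  apply tendsto_nhdsWithin_of_tendsto_nhds_of_eventually_within
  · have h : Tendsto (fun x : ℝ => c * x) (𝓝 0) (𝓝 (c * 0)) :=
      ((continuous_const.mul continuous_id).tendsto (0 : ℝ))
    rw [mul_zero] at h
    exact h.mono_left nhdsWithin_le_nhds
  · filter_upwards [self_mem_nhdsWithin] with x hx
    exact Set.mem_Ioi.mpr (mul_pos hc hx)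

lemma ofReal_rpow_split {c lam : ℝ} (hc : 0 < c) (hlam : 0 < lam) (p : ℝ) :
    ENNReal.ofReal (lam ^ p) =
      ENNReal.ofReal (c ^ (-p)) * ENNReal.ofReal ((c * lam) ^ p) := by
  rw [← ENNReal.ofReal_mul (by positivity)]
  congr 1
  rw [Real.mul_rpow hc.le hlam.le, ← mul_assoc, ← Real.rpow_add hc, neg_add_cancel,
    Real.rpow_zero, one_mul]

lemma ofReal_rpow_bound {c lam C p : ℝ} (hc : 0 < c) (hlam : 0 < lam) :
    ENNReal.ofReal (lam ^ p) * ENNReal.ofReal (C * (c * lam) ^ (-p)) =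
      ENNReal.ofReal (C * c ^ (-p)) := by
  rw [← ENNReal.ofReal_mul (by positivity)]
  congr 1
  rw [Real.mul_rpow hc.le hlam.le]
  calc lam ^ p * (C * (c ^ (-p) * lam ^ (-p)))
      = C * c ^ (-p) * (lam ^ p * lam ^ (-p)) := by ring
    _ = C * c ^ (-p) := by
        rw [← Real.rpow_add hlam, add_neg_cancel, Real.rpow_zero, mul_one]

lemma tendsto_one_add_rpow (C p a : ℝ) :
    Tendsto (fun t : ℝ => C * (1 + a * t) ^ (-p)) (𝓝 0) (𝓝 C) := by
  have h1 : Tendsto (fun t : ℝ => 1 + a * t) (𝓝 0) (𝓝 1) := by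
    have h0 : Tendsto (fun t : ℝ => 1 + a * t) (𝓝 0) (𝓝 (1 + a * 0)) :=
      ((continuous_const.add (continuous_const.mul continuous_id)).tendsto (0 : ℝ))
    simpa using h0
  have h2 : ContinuousAt (fun x : ℝ => x ^ (-p)) 1 :=
    Real.continuousAt_rpow_const 1 (-p) (Or.inl one_ne_zero)
  have h3 := (h2.tendsto.comp h1).const_mul C
  simpa using h3

end Helpers

/-- Asymptotic perturbation lemma: if `n(λ, T) ≤ C λ^{-p}` and `n(λ, T') = o(λ^{-p})`
as `λ → 0`, then `limsup_{λ→0} λ^p n(λ, T+T') ≤ C`; if moreover `n(λ, T) ~ C λ^{-p}`,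
then `n(λ, T+T') ~ C λ^{-p}`. -/
theorem asymptotic_perturbation {H : Type*} [NormedAddCommGroup H]
    [InnerProductSpace ℂ H] [CompleteSpace H] (T T' : H →L[ℂ] H)
    (hT : IsCompactOperator T) (hT' : IsCompactOperator T')
    (C p : ℝ) (hC : 0 < C) (hp : 0 < p)
    (hbound : ∀ lam : ℝ, 0 < lam → nCountE T lam ≤ ENNReal.ofReal (C * lam ^ (-p)))
    (hsmall : Tendsto (fun lam : ℝ => ENNReal.ofReal (lam ^ p) * nCountE T' lam)
      (𝓝[>] 0) (𝓝 0)) :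
    (limsup (fun lam : ℝ => ENNReal.ofReal (lam ^ p) * nCountE (T + T') lam) (𝓝[>] 0)
        ≤ ENNReal.ofReal C) ∧
    ((Tendsto (fun lam : ℝ => ENNReal.ofReal (lam ^ p) * nCountE T lam) (𝓝[>] 0)
        (𝓝 (ENNReal.ofReal C))) →
      Tendsto (fun lam : ℝ => ENNReal.ofReal (lam ^ p) * nCountE (T + T') lam) (𝓝[>] 0)
        (𝓝 (ENNReal.ofReal C))) := by
  have hsm : ∀ c : ℝ, 0 < c → Tendsto (fun lam : ℝ =>
      ENNReal.ofReal (c ^ (-p)) * (ENNReal.ofReal ((c * lam) ^ p) * nCountE T' (c * lam)))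
      (𝓝[>] 0) (𝓝 0) := by
    intro c hc
    have h1 : Tendsto (fun lam : ℝ => ENNReal.ofReal ((c * lam) ^ p) * nCountE T' (c * lam))
        (𝓝[>] 0) (𝓝 0) := hsmall.comp (tendsto_const_mul_nhdsGT hc)
    have h2 := ENNReal.Tendsto.const_mul h1 (Or.inr (ENNReal.ofReal_ne_top (r := c ^ (-p))))
    simpa using h2
  have claim1 : ∀ ε : ℝ, 0 < ε → ε < 1 →
      limsup (fun lam : ℝ => ENNReal.ofReal (lam ^ p) * nCountE (T + T') lam) (𝓝[>] 0)
        ≤ ENNReal.ofReal (C * (1 - ε) ^ (-p)) := by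
    intro ε hε hε1
    have h1ε : 0 < 1 - ε := by linarith
    have hev : ∀ᶠ lam in 𝓝[>] (0:ℝ),
        ENNReal.ofReal (lam ^ p) * nCountE (T + T') lam
          ≤ ENNReal.ofReal (C * (1 - ε) ^ (-p)) +
            ENNReal.ofReal (ε ^ (-p)) * (ENNReal.ofReal ((ε * lam) ^ p) * nCountE T' (ε * lam)) := by
      filter_upwards [self_mem_nhdsWithin] with lam hlam
      have hlam' : (0:ℝ) < lam := hlam
      have hsplit : nCountE (T + T') lam ≤ nCountE T ((1 - ε) * lam) + nCountE T' (ε * lam) := by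
        have heq : (1 - ε) * lam + ε * lam = lam := by ring
        calc nCountE (T + T') lam = nCountE (T + T') ((1 - ε) * lam + ε * lam) := by rw [heq]
          _ ≤ _ := nCountE_add_le T T' _ _
      calc ENNReal.ofReal (lam ^ p) * nCountE (T + T') lam
          ≤ ENNReal.ofReal (lam ^ p) * (nCountE T ((1 - ε) * lam) + nCountE T' (ε * lam)) :=
            mul_le_mul_right hsplit _
        _ = ENNReal.ofReal (lam ^ p) * nCountE T ((1 - ε) * lam)
            + ENNReal.ofReal (lam ^ p) * nCountE T' (ε * lam) := mul_add _ _ _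
        _ ≤ ENNReal.ofReal (C * (1 - ε) ^ (-p)) +
            ENNReal.ofReal (ε ^ (-p)) * (ENNReal.ofReal ((ε * lam) ^ p) * nCountE T' (ε * lam)) := by
            refine add_le_add ?_ ?_
            · calc ENNReal.ofReal (lam ^ p) * nCountE T ((1 - ε) * lam)
                  ≤ ENNReal.ofReal (lam ^ p) * ENNReal.ofReal (C * ((1 - ε) * lam) ^ (-p)) :=
                    mul_le_mul_right (hbound _ (mul_pos h1ε hlam')) _
                _ = ENNReal.ofReal (C * (1 - ε) ^ (-p)) := ofReal_rpow_bound h1ε hlam'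
            · rw [ofReal_rpow_split hε hlam' p, mul_assoc]
    have htendc : Tendsto (fun lam : ℝ => ENNReal.ofReal (C * (1 - ε) ^ (-p)) +
        ENNReal.ofReal (ε ^ (-p)) * (ENNReal.ofReal ((ε * lam) ^ p) * nCountE T' (ε * lam)))
        (𝓝[>] (0:ℝ)) (𝓝 (ENNReal.ofReal (C * (1 - ε) ^ (-p)) + 0)) :=
      tendsto_const_nhds.add (hsm ε hε)
    calc limsup (fun lam : ℝ => ENNReal.ofReal (lam ^ p) * nCountE (T + T') lam) (𝓝[>] 0)
        ≤ limsup (fun lam : ℝ => ENNReal.ofReal (C * (1 - ε) ^ (-p)) +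
            ENNReal.ofReal (ε ^ (-p)) * (ENNReal.ofReal ((ε * lam) ^ p) * nCountE T' (ε * lam)))
            (𝓝[>] 0) := limsup_le_limsup hev
      _ = ENNReal.ofReal (C * (1 - ε) ^ (-p)) + 0 := htendc.limsup_eq
      _ = ENNReal.ofReal (C * (1 - ε) ^ (-p)) := add_zero _
  have part1 : limsup (fun lam : ℝ => ENNReal.ofReal (lam ^ p) * nCountE (T + T') lam) (𝓝[>] 0)
      ≤ ENNReal.ofReal C := by
    refine ENNReal.le_of_forall_pos_le_add fun η hη _ => ?_
    have hcont : Tendsto (fun t : ℝ => C * (1 - t) ^ (-p)) (𝓝[>] (0:ℝ)) (𝓝 C) := by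
      refine ((tendsto_one_add_rpow C p (-1)).mono_left nhdsWithin_le_nhds).congr fun t => ?_
      rw [neg_one_mul, ← sub_eq_add_neg]
    have hηR : (0:ℝ) < (η:ℝ) := hη
    have hlt : ∀ᶠ t in 𝓝[>] (0:ℝ), C * (1 - t) ^ (-p) < C + (η:ℝ) :=
      hcont.eventually_lt_const (lt_add_of_pos_right C hηR)
    have h1 : ∀ᶠ t in 𝓝[>] (0:ℝ), t < 1 :=
      (eventually_lt_nhds (by norm_num : (0:ℝ) < 1)).filter_mono nhdsWithin_le_nhds
    obtain ⟨t, htlt, ht1, ht0⟩ := (hlt.and (h1.and self_mem_nhdsWithin)).exists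
    calc limsup (fun lam : ℝ => ENNReal.ofReal (lam ^ p) * nCountE (T + T') lam) (𝓝[>] 0)
        ≤ ENNReal.ofReal (C * (1 - t) ^ (-p)) := claim1 t ht0 ht1
      _ ≤ ENNReal.ofReal (C + (η:ℝ)) := ENNReal.ofReal_le_ofReal htlt.le
      _ = ENNReal.ofReal C + ENNReal.ofReal (η:ℝ) := ENNReal.ofReal_add hC.le η.coe_nonneg
      _ = ENNReal.ofReal C + η := by rw [ENNReal.ofReal_coe_nnreal]
  refine ⟨part1, fun htend => ?_⟩
  have claim2 : ∀ δ : ℝ, 0 < δ → ENNReal.ofReal (C * (1 + δ) ^ (-p)) ≤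
      liminf (fun lam : ℝ => ENNReal.ofReal (lam ^ p) * nCountE (T + T') lam) (𝓝[>] 0) := by
    intro δ hδ
    have h1δ : 0 < 1 + δ := by linarith
    have hg : Tendsto (fun lam : ℝ => ENNReal.ofReal ((1 + δ) ^ (-p)) *
        (ENNReal.ofReal (((1 + δ) * lam) ^ p) * nCountE T (((1 + δ) * lam))))
        (𝓝[>] 0) (𝓝 (ENNReal.ofReal (C * (1 + δ) ^ (-p)))) := by
      have h1 := htend.comp (tendsto_const_mul_nhdsGT h1δ)
      have h2 := ENNReal.Tendsto.const_mul h1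
        (Or.inr (ENNReal.ofReal_ne_top (r := (1 + δ) ^ (-p))))
      have heq : ENNReal.ofReal ((1 + δ) ^ (-p)) * ENNReal.ofReal C
          = ENNReal.ofReal (C * (1 + δ) ^ (-p)) := by
        rw [← ENNReal.ofReal_mul (by positivity), mul_comm]
      rw [heq] at h2
      exact h2
    have hev2 : ∀ᶠ lam in 𝓝[>] (0:ℝ),
        ENNReal.ofReal ((1 + δ) ^ (-p)) *
          (ENNReal.ofReal (((1 + δ) * lam) ^ p) * nCountE T (((1 + δ) * lam)))
        ≤ ENNReal.ofReal (lam ^ p) * nCountE (T + T') lam +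
          ENNReal.ofReal (δ ^ (-p)) * (ENNReal.ofReal ((δ * lam) ^ p) * nCountE T' (δ * lam)) := by
      filter_upwards [self_mem_nhdsWithin] with lam hlam
      have hlam' : (0:ℝ) < lam := hlam
      have hsplit2 : nCountE T ((1 + δ) * lam)
          ≤ nCountE (T + T') lam + nCountE T' (δ * lam) := by
        have heq : (1 + δ) * lam = lam + δ * lam := by ring
        calc nCountE T ((1 + δ) * lam) = nCountE (T + T' + -T') (lam + δ * lam) := by
              rw [add_neg_cancel_right, heq]
          _ ≤ nCountE (T + T') lam + nCountE (-T') (δ * lam) := nCountE_add_le _ _ _ _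
          _ = nCountE (T + T') lam + nCountE T' (δ * lam) := by rw [nCountE_neg]
      calc ENNReal.ofReal ((1 + δ) ^ (-p)) *
            (ENNReal.ofReal (((1 + δ) * lam) ^ p) * nCountE T (((1 + δ) * lam)))
          = ENNReal.ofReal (lam ^ p) * nCountE T ((1 + δ) * lam) := by
            rw [ofReal_rpow_split h1δ hlam' p, mul_assoc]
        _ ≤ ENNReal.ofReal (lam ^ p) * (nCountE (T + T') lam + nCountE T' (δ * lam)) :=
            mul_le_mul_right hsplit2 _
        _ = ENNReal.ofReal (lam ^ p) * nCountE (T + T') lam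
            + ENNReal.ofReal (lam ^ p) * nCountE T' (δ * lam) := mul_add _ _ _
        _ = ENNReal.ofReal (lam ^ p) * nCountE (T + T') lam +
            ENNReal.ofReal (δ ^ (-p)) * (ENNReal.ofReal ((δ * lam) ^ p) * nCountE T' (δ * lam)) := by
            rw [ofReal_rpow_split hδ hlam' p]; ring
    refine ENNReal.le_of_forall_pos_le_add fun η hη _ => ?_
    have hη' : (0:ℝ≥0∞) < (η:ℝ≥0∞) := by exact_mod_cast hη
    have hevη := (hsm δ hδ).eventually_lt_const hη'
    have hev3 : ∀ᶠ lam in 𝓝[>] (0:ℝ),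
        ENNReal.ofReal ((1 + δ) ^ (-p)) *
          (ENNReal.ofReal (((1 + δ) * lam) ^ p) * nCountE T (((1 + δ) * lam)))
        ≤ ENNReal.ofReal (lam ^ p) * nCountE (T + T') lam + (η:ℝ≥0∞) := by
      filter_upwards [hev2, hevη] with lam h2 hη2
      exact h2.trans (add_le_add_right hη2.le _)
    have h4 := liminf_le_liminf hev3
    rw [hg.liminf_eq] at h4
    rwa [liminf_add_const (𝓝[>] (0:ℝ))
      (fun lam : ℝ => ENNReal.ofReal (lam ^ p) * nCountE (T + T') lam) (η:ℝ≥0∞)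
      (IsBoundedUnder.isCoboundedUnder_ge ⟨⊤, Eventually.of_forall fun _ => le_top⟩)
      ⟨0, Eventually.of_forall fun _ => zero_le⟩] at h4
  have hliminf : ENNReal.ofReal C ≤
      liminf (fun lam : ℝ => ENNReal.ofReal (lam ^ p) * nCountE (T + T') lam) (𝓝[>] 0) := by
    refine ENNReal.le_of_forall_pos_le_add fun η hη _ => ?_
    have hcont : Tendsto (fun t : ℝ => C * (1 + t) ^ (-p)) (𝓝[>] (0:ℝ)) (𝓝 C) := by
      refine ((tendsto_one_add_rpow C p 1).mono_left nhdsWithin_le_nhds).congr fun t => ?_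
      rw [one_mul]
    have hηR : (0:ℝ) < (η:ℝ) := hη
    have hgt : ∀ᶠ t in 𝓝[>] (0:ℝ), C - (η:ℝ) < C * (1 + t) ^ (-p) :=
      hcont.eventually_const_lt (sub_lt_self C hηR)
    obtain ⟨t, htgt, ht0⟩ := (hgt.and self_mem_nhdsWithin).exists
    calc ENNReal.ofReal C ≤ ENNReal.ofReal (C * (1 + t) ^ (-p) + (η:ℝ)) :=
          ENNReal.ofReal_le_ofReal (by linarith)
      _ = ENNReal.ofReal (C * (1 + t) ^ (-p)) + ENNReal.ofReal (η:ℝ) :=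
          ENNReal.ofReal_add (by positivity) η.coe_nonneg
      _ = ENNReal.ofReal (C * (1 + t) ^ (-p)) + η := by rw [ENNReal.ofReal_coe_nnreal]
      _ ≤ liminf (fun lam : ℝ => ENNReal.ofReal (lam ^ p) * nCountE (T + T') lam) (𝓝[>] 0) + η :=
          add_le_add_left (claim2 t ht0) _
  exact tendsto_of_le_liminf_of_limsup_le hliminf part1
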